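/- Let c > 0 be a real number, let S := {u ∈ ℂ : 0 < Re u < π/c}, and let f(u) := e^{−u}·cos(cu)/sin(cu), which is holomorphic on the convex open set S. For W ∈ S define F_c(W) as the integral of f along the straight segment from π/(2c) to W (which lies in S). Let ℛ₀ := {W ∈ S : −1/2 < Im W < 1/2}. Then, as W → 0 within ℛ₀, F_c(W) − (1/c)·Log(cW) converges to −(1/c)·∫₀^{π/(2c)} e^{−u}·ln(sin(cu)) du, where Log denotes the principal branch of the complex logarithm and the real integral is a convergent improper integral. -/

import Mathlib

open Filter Topology Real MeasureTheory intervalIntegral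

/-- The function `f(u) = e^{-u} cot(cu)`, holomorphic on the strip `0 < Re u < π/c`. -/
noncomputable def fcot (c : ℝ) (u : ℂ) : ℂ :=
  Complex.exp (-u) * (Complex.cos ((c : ℂ) * u) / Complex.sin ((c : ℂ) * u))

/-- The point `π/(2c) + t (W - π/(2c))` of the segment from `π/(2c)` to `W`. -/
noncomputable def segPoint (c : ℝ) (W : ℂ) (t : ℝ) : ℂ :=
  ((π / (2 * c) : ℝ) : ℂ) + (t : ℂ) * (W - ((π / (2 * c) : ℝ) : ℂ))

/-- `F_c(W)`: the integral of `e^{-u} cot(cu)` along the segment from `π/(2c)` to `W`. -/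
noncomputable def Fc (c : ℝ) (W : ℂ) : ℂ :=
  ∫ t in (0 : ℝ)..(1 : ℝ), (W - ((π / (2 * c) : ℝ) : ℂ)) * fcot c (segPoint c W t)

/-- The region `ℛ₀ = {W : 0 < Re W < π/c, -1/2 < Im W < 1/2}`. -/
def regionR0 (c : ℝ) : Set ℂ :=
  {W : ℂ | 0 < W.re ∧ W.re < π / c ∧ -(1 / 2) < W.im ∧ W.im < 1 / 2}

namespace FcAux

open Set

variable {c : ℝ}

/-- Integrability of `log` on `[0, b]`. -/
lemma intervalIntegrable_log_zero {b : ℝ} (hb : 0 < b) :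
    IntervalIntegrable Real.log volume 0 b := by
  have key : ∀ b' : ℝ, 0 < b' → b' ≤ 1 → IntervalIntegrable Real.log volume 0 b' := by
    intro b' hb' hb1
    have h : IntegrableOn (fun u : ℝ => -Real.log u) (Ioc 0 b') volume := by
      apply intervalIntegral.integrableOn_deriv_of_nonneg (g := fun u => u - u * Real.log u)
      · exact (continuous_id.sub Real.continuous_mul_log).continuousOn
      · intro x hx
        have hx0 : x ≠ 0 := ne_of_gt hx.1
        exact ((hasDerivAt_id' x).sub (Real.hasDerivAt_mul_log hx0)).congr_deriv (by ring)
      · intro x hx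
        have : Real.log x ≤ 0 := Real.log_nonpos hx.1.le (hx.2.le.trans hb1)
        linarith
    have h2 : IntegrableOn Real.log (Ioc 0 b') volume := integrable_neg_iff.mp h
    rw [intervalIntegrable_iff_integrableOn_Ioc_of_le hb'.le]
    exact h2
  rcases le_or_gt b 1 with hb1 | hb1
  · exact key b hb hb1
  · refine (key 1 one_pos le_rfl).trans ?_
    refine intervalIntegrable_log ?_
    intro h
    rw [Set.mem_uIcc] at h
    rcases h with h | h <;> linarith

lemma bb_pos (hc : 0 < c) : 0 < π / (2 * c) := by positivity

lemma bb_lt (hc : 0 < c) : π / (2 * c) < π / c := by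
  rw [div_lt_div_iff₀ (by positivity) hc]
  nlinarith [pi_pos]

lemma c_mul_bb (hc : 0 < c) : c * (π / (2 * c)) = π / 2 := by
  field_simp

/-- `sin (c u) > 0` for `u ∈ (0, π/c)` real. -/
lemma sin_pos_real (hc : 0 < c) {u : ℝ} (h0 : 0 < u) (h1 : u < π / c) :
    0 < Real.sin (c * u) := by
  apply Real.sin_pos_of_pos_of_lt_pi (by positivity)
  calc c * u < c * (π / c) := by apply mul_lt_mul_of_pos_left h1 hc
  _ = π := by field_simp

/-- Integrability of the main real integrand on `[0, π/(2c)]`. -/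
lemma integrable_main (hc : 0 < c) :
    IntervalIntegrable (fun u => Real.exp (-u) * Real.log (Real.sin (c * u)))
      volume 0 (π / (2 * c)) := by
  set b := π / (2 * c) with hbdef
  have hb : 0 < b := bb_pos hc
  have hbound : IntervalIntegrable (fun u => -Real.log (2 * c / π) - Real.log u)
      volume 0 b :=
    (intervalIntegrable_const.sub (intervalIntegrable_log_zero hb))
  rw [intervalIntegrable_iff_integrableOn_Ioc_of_le hb.le]
  rw [intervalIntegrable_iff_integrableOn_Ioc_of_le hb.le] at hbound
  apply hbound.mono' (g := fun u => -Real.log (2 * c / π) - Real.log u)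
  · -- measurability
    apply Measurable.aestronglyMeasurable
    exact ((Real.measurable_exp.comp measurable_neg).mul
      (Real.measurable_log.comp (Real.measurable_sin.comp (measurable_const_mul c))))
  · rw [ae_restrict_iff' measurableSet_Ioc]
    filter_upwards with u hu
    have hu0 : 0 < u := hu.1
    have hub : u ≤ b := hu.2
    have hcu : 0 < c * u := by positivity
    have hcub : c * u ≤ π / 2 := by
      calc c * u ≤ c * b := by nlinarith
      _ = π / 2 := c_mul_bb hc
    have hsin_pos : 0 < Real.sin (c * u) :=
      sin_pos_real hc hu0 (lt_of_le_of_lt hub (bb_lt hc))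
    have hsin_le : Real.sin (c * u) ≤ 1 := Real.sin_le_one _
    have hlow : 2 / π * (c * u) ≤ Real.sin (c * u) :=
      Real.mul_le_sin hcu.le hcub
    have hlow' : 0 < 2 / π * (c * u) := by positivity
    have hlog1 : Real.log (Real.sin (c * u)) ≤ 0 := Real.log_nonpos hsin_pos.le hsin_le
    have hlog2 : Real.log (2 / π * (c * u)) ≤ Real.log (Real.sin (c * u)) :=
      Real.log_le_log hlow' hlow
    have hsplit : Real.log (2 / π * (c * u)) = Real.log (2 * c / π) + Real.log u := by
      rw [show 2 / π * (c * u) = (2 * c / π) * u by ring]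
      exact Real.log_mul (by positivity) (ne_of_gt hu0)
    rw [Real.norm_eq_abs, abs_mul, abs_of_pos (Real.exp_pos _),
      abs_of_nonpos hlog1]
    have hexp : Real.exp (-u) ≤ 1 := Real.exp_le_one_iff.mpr (by linarith)
    calc Real.exp (-u) * -Real.log (Real.sin (c * u))
        ≤ 1 * -Real.log (Real.sin (c * u)) := by
          apply mul_le_mul_of_nonneg_right hexp (by linarith)
      _ = -Real.log (Real.sin (c * u)) := one_mul _
      _ ≤ -(Real.log (2 * c / π) + Real.log u) := by
          rw [← hsplit]; linarith
      _ = -Real.log (2 * c / π) - Real.log u := by ring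

/-- First conjunct: convergence of the improper integral. -/
lemma tendsto_I (hc : 0 < c) :
    Tendsto (fun ε : ℝ =>
        ∫ u in ε..(π / (2 * c)), Real.exp (-u) * Real.log (Real.sin (c * u)))
      (𝓝[>] (0 : ℝ))
      (𝓝 (∫ u in (0:ℝ)..(π / (2 * c)), Real.exp (-u) * Real.log (Real.sin (c * u)))) := by
  set b := π / (2 * c) with hbdef
  have hb : 0 < b := bb_pos hc
  have hcont := intervalIntegral.continuousOn_primitive_interval_left
    (μ := volume) (f := fun u => Real.exp (-u) * Real.log (Real.sin (c * u))) (a := 0) (b := b) ?hint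
  case hint =>
    rw [uIcc_of_le hb.le, integrableOn_Icc_iff_integrableOn_Ioc]
    exact (intervalIntegrable_iff_integrableOn_Ioc_of_le hb.le).mp (integrable_main hc)
  have h0mem : (0:ℝ) ∈ uIcc 0 b := Set.left_mem_uIcc
  have hcw := hcont 0 h0mem
  rw [ContinuousWithinAt] at hcw
  have : 𝓝[>] (0:ℝ) ≤ 𝓝[uIcc 0 b] 0 := by
    rw [← nhdsWithin_Ioc_eq_nhdsGT hb]
    apply nhdsWithin_mono
    rw [uIcc_of_le hb.le]
    exact Set.Ioc_subset_Icc_self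
  exact hcw.mono_left this


/-! ### Complex side -/

/-- The regular part `g(u) = fcot c u - 1/(cu)`. -/
noncomputable def g (c : ℝ) (u : ℂ) : ℂ := fcot c u - ((c : ℂ) * u)⁻¹

lemma sin_ne_zero_ball (hc : 0 < c) {u : ℂ} (hu : ‖u‖ < π / c) (h0 : u ≠ 0) :
    Complex.sin ((c : ℂ) * u) ≠ 0 := by
  intro h
  rw [Complex.sin_eq_zero_iff] at h
  obtain ⟨k, hk⟩ := h
  have hcne : (c : ℂ) ≠ 0 := Complex.ofReal_ne_zero.mpr hc.ne'
  have hu' : u = ((k * π / c : ℝ) : ℂ) := by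
    push_cast
    field_simp at hk ⊢
    linear_combination hk
  have hk0 : k ≠ 0 := by
    intro h0'
    apply h0
    rw [hu', h0']
    simp
  have h1 : (1 : ℝ) ≤ |(k : ℝ)| := by
    have := Int.one_le_abs hk0
    calc (1:ℝ) ≤ |(k:ℤ)| := by exact_mod_cast this
    _ = |(k:ℝ)| := by push_cast [Int.cast_abs]; rfl
  have : ‖u‖ = |(k : ℝ)| * π / c := by
    rw [hu', Complex.norm_real, Real.norm_eq_abs, abs_div, abs_mul,
      abs_of_pos pi_pos, abs_of_pos hc]
  rw [this] at hu
  have : π / c ≤ |(k : ℝ)| * π / c := by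
    gcongr
    nlinarith [pi_pos]
  linarith

lemma g_diffOn (hc : 0 < c) :
    DifferentiableOn ℂ (g c) (Metric.ball (0 : ℂ) (π / c) \ {0}) := by
  intro u hu
  obtain ⟨hub, hu0⟩ := hu
  rw [Metric.mem_ball, dist_zero_right] at hub
  have hu0' : u ≠ 0 := hu0
  have hsin : Complex.sin ((c : ℂ) * u) ≠ 0 := sin_ne_zero_ball hc hub hu0'
  have hcu : (c : ℂ) * u ≠ 0 :=
    mul_ne_zero (Complex.ofReal_ne_zero.mpr hc.ne') hu0'
  apply DifferentiableAt.differentiableWithinAt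
  apply DifferentiableAt.sub
  · apply DifferentiableAt.mul
    · exact (differentiable_neg u).cexp
    · exact DifferentiableAt.div
        (((differentiableAt_const _).mul differentiableAt_id).ccos)
        (((differentiableAt_const _).mul differentiableAt_id).csin) hsin
  · exact ((differentiableAt_const _).mul differentiableAt_id).inv hcu

lemma tendsto_mul_fcot (hc : 0 < c) :
    Tendsto (fun z : ℂ => z * fcot c z) (𝓝[≠] (0 : ℂ)) (𝓝 ((c : ℂ)⁻¹)) := by
  have hcne : (c : ℂ) ≠ 0 := Complex.ofReal_ne_zero.mpr hc.ne'
  have hsin : HasDerivAt (fun z : ℂ => Complex.sin ((c : ℂ) * z)) (c : ℂ) 0 := by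
    have h1 : HasDerivAt (fun z : ℂ => Complex.sin ((c : ℂ) * z))
        (Complex.cos ((c : ℂ) * 0) * (c : ℂ)) 0 := by
      exact (Complex.hasDerivAt_sin _).comp 0 (by simpa using (hasDerivAt_id (0:ℂ)).const_mul (c:ℂ))
    simpa using h1
  have hslope : Tendsto (fun z : ℂ => Complex.sin ((c : ℂ) * z) / z) (𝓝[≠] 0) (𝓝 (c : ℂ)) := by
    have := hasDerivAt_iff_tendsto_slope.mp hsin
    apply this.congr
    intro z
    simp [slope_def_field, div_eq_inv_mul]
  have hinv : Tendsto (fun z : ℂ => z / Complex.sin ((c : ℂ) * z)) (𝓝[≠] 0) (𝓝 ((c : ℂ)⁻¹)) := by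
    have := hslope.inv₀ hcne
    apply this.congr
    intro z
    rw [inv_div]
  have hec : Tendsto (fun z : ℂ => Complex.exp (-z) * Complex.cos ((c : ℂ) * z)) (𝓝[≠] 0)
      (𝓝 1) := by
    have : ContinuousAt (fun z : ℂ => Complex.exp (-z) * Complex.cos ((c : ℂ) * z)) 0 := by
      fun_prop
    have h := this.tendsto.mono_left (nhdsWithin_le_nhds (s := {(0:ℂ)}ᶜ))
    simpa using h
  have := hec.mul hinv
  rw [one_mul] at this
  apply this.congr
  intro z
  simp only [fcot]
  ring

lemma g_littleO (hc : 0 < c) :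
    (fun z : ℂ => g c z - g c 0) =o[𝓝[≠] (0 : ℂ)] fun z => (z - 0)⁻¹ := by
  have hg0 : g c 0 = 0 := by simp [g, fcot]
  have hcne : (c : ℂ) ≠ 0 := Complex.ofReal_ne_zero.mpr hc.ne'
  rw [Asymptotics.isLittleO_iff_tendsto']
  · have key : Tendsto (fun z : ℂ => z * fcot c z - (c : ℂ)⁻¹) (𝓝[≠] 0) (𝓝 0) := by
      simpa using (tendsto_mul_fcot hc).sub_const ((c : ℂ)⁻¹)
    apply key.congr'
    filter_upwards [self_mem_nhdsWithin] with z hz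
    have hz0 : z ≠ 0 := hz
    rw [hg0, sub_zero, sub_zero, div_eq_mul_inv, inv_inv]
    simp only [g]
    field_simp
  · filter_upwards [self_mem_nhdsWithin] with z hz h
    rw [sub_zero, inv_eq_zero] at h
    exact absurd h hz

/-- The continuous extension of `g` over `0`. -/
noncomputable def gext (c : ℝ) : ℂ → ℂ :=
  Function.update (g c) 0 (limUnder (𝓝[≠] (0 : ℂ)) (g c))

lemma gext_diffOn (hc : 0 < c) :
    DifferentiableOn ℂ (gext c) (Metric.ball (0 : ℂ) (π / c)) := by
  apply Complex.differentiableOn_update_limUnder_of_isLittleO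
    (Metric.ball_mem_nhds _ (by positivity)) (g_diffOn hc) (g_littleO hc)

lemma gext_eq {u : ℂ} (hu : u ≠ 0) : gext c u = g c u :=
  Function.update_of_ne hu _ _


/-! ### Segment facts and the key identity -/

lemma seg_re_pos (hc : 0 < c) {W : ℂ} (hW : 0 < W.re) {t : ℝ} (ht : t ∈ Set.Icc (0:ℝ) 1) :
    0 < (segPoint c W t).re := by
  have hb : 0 < π / (2 * c) := bb_pos hc
  simp only [segPoint, Complex.add_re, Complex.ofReal_re, Complex.mul_re, Complex.ofReal_im,
    Complex.sub_re, Complex.sub_im]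
  obtain ⟨ht0, ht1⟩ := ht
  nlinarith [mul_nonneg ht0 hW.le, mul_nonneg (sub_nonneg.mpr ht1) hb.le]

lemma seg_ne_zero (hc : 0 < c) {W : ℂ} (hW : 0 < W.re) {t : ℝ} (ht : t ∈ Set.Icc (0:ℝ) 1) :
    segPoint c W t ≠ 0 := by
  intro h
  have := seg_re_pos hc hW ht
  rw [h] at this
  simp at this

lemma seg_norm_le (hc : 0 < c) {W : ℂ} {r : ℝ} (hr : π / (2 * c) ≤ r) (hW : ‖W‖ ≤ r)
    {t : ℝ} (ht : t ∈ Set.Icc (0:ℝ) 1) : ‖segPoint c W t‖ ≤ r := by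
  obtain ⟨ht0, ht1⟩ := ht
  have hb : 0 < π / (2 * c) := bb_pos hc
  have : segPoint c W t = ((1 - t : ℝ) : ℂ) * ((π / (2 * c) : ℝ) : ℂ) + (t : ℂ) * W := by
    simp only [segPoint]; push_cast; ring
  rw [this]
  calc ‖((1 - t : ℝ) : ℂ) * ((π / (2 * c) : ℝ) : ℂ) + (t : ℂ) * W‖
      ≤ ‖((1 - t : ℝ) : ℂ) * ((π / (2 * c) : ℝ) : ℂ)‖ + ‖(t : ℂ) * W‖ := norm_add_le _ _
    _ = (1 - t) * (π / (2 * c)) + t * ‖W‖ := by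
        rw [norm_mul, norm_mul, Complex.norm_real, Complex.norm_real, Real.norm_eq_abs,
          Real.norm_eq_abs, Complex.norm_real, Real.norm_eq_abs, abs_of_nonneg (by linarith),
          abs_of_nonneg ht0, abs_of_pos hb]
    _ ≤ r := by nlinarith

lemma seg_hasDerivAt (c : ℝ) (W : ℂ) (t : ℝ) :
    HasDerivAt (fun s : ℝ => segPoint c W s) (W - ((π / (2 * c) : ℝ) : ℂ)) t := by
  simp only [segPoint]
  have h1 : HasDerivAt (fun s : ℝ => ((s : ℝ) : ℂ)) 1 t := Complex.ofRealCLM.hasDerivAt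
  have h2 := (h1.mul_const (W - ((π / (2 * c) : ℝ) : ℂ))).const_add (((π / (2 * c) : ℝ) : ℂ))
  simpa using h2

lemma seg_continuous (c : ℝ) (W : ℂ) : Continuous (fun t : ℝ => segPoint c W t) := by
  simp only [segPoint]
  fun_prop

/-- The key identity. -/
lemma Fc_eq (hc : 0 < c) {W : ℂ} (hW : 0 < W.re) (hWn : ‖W‖ ≤ π / (2 * c)) :
    Fc c W = (∫ t in (0:ℝ)..1, (W - ((π / (2 * c) : ℝ) : ℂ)) * gext c (segPoint c W t))
      + (1 / (c : ℂ)) * (Complex.log W - Complex.log ((π / (2 * c) : ℝ) : ℂ)) := by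
  have hb : 0 < π / (2 * c) := bb_pos hc
  have hblt : π / (2 * c) < π / c := bb_lt hc
  have hcne : (c : ℂ) ≠ 0 := Complex.ofReal_ne_zero.mpr hc.ne'
  have hseg_ball : ∀ t ∈ Set.Icc (0:ℝ) 1, segPoint c W t ∈ Metric.ball (0:ℂ) (π / c) := by
    intro t ht
    rw [Metric.mem_ball, dist_zero_right]
    exact lt_of_le_of_lt (seg_norm_le hc le_rfl hWn ht) hblt
  have hseg_ne : ∀ t ∈ Set.Icc (0:ℝ) 1, segPoint c W t ≠ 0 := fun t ht => seg_ne_zero hc hW ht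
  -- continuity of the two integrands
  have hgext_cont : ContinuousOn (gext c) (Metric.ball (0:ℂ) (π / c)) :=
    (gext_diffOn hc).continuousOn
  have hcontA : ContinuousOn (fun t : ℝ => (W - ((π / (2 * c) : ℝ) : ℂ)) * gext c (segPoint c W t))
      (Set.Icc (0:ℝ) 1) := by
    apply ContinuousOn.mul continuousOn_const
    exact hgext_cont.comp (seg_continuous c W).continuousOn hseg_ball
  have hcontB : ContinuousOn
      (fun t : ℝ => (W - ((π / (2 * c) : ℝ) : ℂ)) * ((c : ℂ) * segPoint c W t)⁻¹)
      (Set.Icc (0:ℝ) 1) := by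
    apply ContinuousOn.mul continuousOn_const
    apply ContinuousOn.inv₀
    · exact (continuousOn_const.mul (seg_continuous c W).continuousOn)
    · intro t ht
      exact mul_ne_zero hcne (hseg_ne t ht)
  have hIA : IntervalIntegrable
      (fun t : ℝ => (W - ((π / (2 * c) : ℝ) : ℂ)) * gext c (segPoint c W t)) volume 0 1 := by
    apply ContinuousOn.intervalIntegrable
    rwa [Set.uIcc_of_le (by norm_num : (0:ℝ) ≤ 1)]
  have hIB : IntervalIntegrable
      (fun t : ℝ => (W - ((π / (2 * c) : ℝ) : ℂ)) * ((c : ℂ) * segPoint c W t)⁻¹) volume 0 1 := by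
    apply ContinuousOn.intervalIntegrable
    rwa [Set.uIcc_of_le (by norm_num : (0:ℝ) ≤ 1)]
  -- the integrand of Fc splits
  have hsplit : ∀ t ∈ Set.uIcc (0:ℝ) 1,
      (W - ((π / (2 * c) : ℝ) : ℂ)) * fcot c (segPoint c W t)
      = (W - ((π / (2 * c) : ℝ) : ℂ)) * gext c (segPoint c W t)
        + (W - ((π / (2 * c) : ℝ) : ℂ)) * ((c : ℂ) * segPoint c W t)⁻¹ := by
    intro t ht
    rw [Set.uIcc_of_le (by norm_num : (0:ℝ) ≤ 1)] at ht
    rw [gext_eq (hseg_ne t ht)]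
    simp only [g]
    ring
  have hFc : Fc c W = (∫ t in (0:ℝ)..1, (W - ((π / (2 * c) : ℝ) : ℂ)) * gext c (segPoint c W t))
      + ∫ t in (0:ℝ)..1, (W - ((π / (2 * c) : ℝ) : ℂ)) * ((c : ℂ) * segPoint c W t)⁻¹ := by
    rw [Fc, intervalIntegral.integral_congr hsplit]
    exact intervalIntegral.integral_add hIA hIB
  rw [hFc]
  congr 1
  -- FTC for the logarithmic part
  have hderiv : ∀ t ∈ Set.uIcc (0:ℝ) 1,
      HasDerivAt (fun s : ℝ => (1 / (c : ℂ)) * Complex.log (segPoint c W s))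
        ((W - ((π / (2 * c) : ℝ) : ℂ)) * ((c : ℂ) * segPoint c W t)⁻¹) t := by
    intro t ht
    rw [Set.uIcc_of_le (by norm_num : (0:ℝ) ≤ 1)] at ht
    have hslit : segPoint c W t ∈ Complex.slitPlane :=
      Complex.mem_slitPlane_iff.mpr (Or.inl (seg_re_pos hc hW ht))
    have hlog : HasDerivAt Complex.log (segPoint c W t)⁻¹ (segPoint c W t) :=
      Complex.hasDerivAt_log hslit
    have hcomp := (hlog.comp t (seg_hasDerivAt c W t)).const_mul (1 / (c : ℂ))
    refine hcomp.congr_deriv ?_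
    rw [mul_inv]
    ring
  have hint := intervalIntegral.integral_eq_sub_of_hasDerivAt hderiv hIB
  rw [hint]
  have h1 : segPoint c W 1 = W := by simp [segPoint]
  have h0 : segPoint c W 0 = ((π / (2 * c) : ℝ) : ℂ) := by simp [segPoint]
  rw [h1, h0]
  ring


/-- Continuity of the parametrized integral at `W = 0`. -/
lemma tendsto_Phi (hc : 0 < c) :
    Tendsto (fun W : ℂ => ∫ t in (0:ℝ)..1, (W - ((π / (2 * c) : ℝ) : ℂ)) * gext c (segPoint c W t))
      (𝓝[regionR0 c] (0 : ℂ))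
      (𝓝 (∫ t in (0:ℝ)..1, ((0:ℂ) - ((π / (2 * c) : ℝ) : ℂ)) * gext c (segPoint c 0 t))) := by
  have hb : 0 < π / (2 * c) := bb_pos hc
  have hblt : π / (2 * c) < π / c := bb_lt hc
  have hgext_cont : ContinuousOn (gext c) (Metric.ball (0:ℂ) (π / c)) :=
    (gext_diffOn hc).continuousOn
  -- a bound for gext on the closed ball of radius π/(2c)
  have hcomp : IsCompact (Metric.closedBall (0:ℂ) (π / (2 * c))) := isCompact_closedBall _ _
  have hsub : Metric.closedBall (0:ℂ) (π / (2 * c)) ⊆ Metric.ball (0:ℂ) (π / c) :=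
    Metric.closedBall_subset_ball hblt
  obtain ⟨M, hM⟩ := hcomp.exists_bound_of_continuousOn (hgext_cont.mono hsub)
  have hM0 : 0 ≤ M := le_trans (norm_nonneg _) (hM 0 (Metric.mem_closedBall_self hb.le))
  have hball_mem : Metric.closedBall (0:ℂ) (π / (2 * c)) ∈ 𝓝[regionR0 c] (0:ℂ) :=
    nhdsWithin_le_nhds (Metric.closedBall_mem_nhds _ hb)
  have hseg_mem : ∀ (W : ℂ), ‖W‖ ≤ π / (2 * c) → ∀ t ∈ Set.Icc (0:ℝ) 1,
      segPoint c W t ∈ Metric.closedBall (0:ℂ) (π / (2 * c)) := by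
    intro W hW t ht
    rw [Metric.mem_closedBall, dist_zero_right]
    exact seg_norm_le hc le_rfl hW ht
  apply intervalIntegral.tendsto_integral_filter_of_dominated_convergence
    (bound := fun _ => 2 * (π / (2 * c)) * M)
  · -- measurability
    filter_upwards [hball_mem] with W hWb
    rw [Metric.mem_closedBall, dist_zero_right] at hWb
    have hcont : ContinuousOn
        (fun t : ℝ => (W - ((π / (2 * c) : ℝ) : ℂ)) * gext c (segPoint c W t))
        (Set.Icc (0:ℝ) 1) := by
      apply ContinuousOn.mul continuousOn_const
      exact hgext_cont.comp (seg_continuous c W).continuousOn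
        (fun t ht => hsub (hseg_mem W hWb t ht))
    apply (hcont.mono ?_).aestronglyMeasurable measurableSet_uIoc
    rw [Set.uIoc_of_le (by norm_num : (0:ℝ) ≤ 1)]
    exact Set.Ioc_subset_Icc_self
  · -- bound
    filter_upwards [hball_mem] with W hWb
    rw [Metric.mem_closedBall, dist_zero_right] at hWb
    filter_upwards with t ht
    rw [Set.uIoc_of_le (by norm_num : (0:ℝ) ≤ 1)] at ht
    have htI : t ∈ Set.Icc (0:ℝ) 1 := Set.Ioc_subset_Icc_self ht
    rw [norm_mul]
    have h1 : ‖W - ((π / (2 * c) : ℝ) : ℂ)‖ ≤ 2 * (π / (2 * c)) := by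
      calc ‖W - ((π / (2 * c) : ℝ) : ℂ)‖ ≤ ‖W‖ + ‖((π / (2 * c) : ℝ) : ℂ)‖ := norm_sub_le _ _
        _ ≤ π / (2 * c) + π / (2 * c) := by
            apply add_le_add hWb
            rw [Complex.norm_real, Real.norm_eq_abs, abs_of_pos hb]
        _ = 2 * (π / (2 * c)) := by ring
    have h2 : ‖gext c (segPoint c W t)‖ ≤ M := hM _ (hseg_mem W hWb t htI)
    exact mul_le_mul h1 h2 (norm_nonneg _) (by positivity)
  · exact intervalIntegrable_const
  · -- pointwise convergence
    filter_upwards with t ht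
    rw [Set.uIoc_of_le (by norm_num : (0:ℝ) ≤ 1)] at ht
    have htI : t ∈ Set.Icc (0:ℝ) 1 := Set.Ioc_subset_Icc_self ht
    have hseg0 : segPoint c 0 t ∈ Metric.ball (0:ℂ) (π / c) :=
      hsub (hseg_mem 0 (by simp [hb.le]) t htI)
    have hgc : ContinuousAt (gext c) (segPoint c 0 t) :=
      hgext_cont.continuousAt (Metric.isOpen_ball.mem_nhds hseg0)
    have hcseg : Continuous (fun W : ℂ => segPoint c W t) := by
      simp only [segPoint]; fun_prop
    have : Tendsto (fun W : ℂ => (W - ((π / (2 * c) : ℝ) : ℂ)) * gext c (segPoint c W t)) (𝓝 0)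
        (𝓝 (((0:ℂ) - ((π / (2 * c) : ℝ) : ℂ)) * gext c (segPoint c 0 t))) := by
      apply Tendsto.mul
      · exact (continuous_id.sub continuous_const).tendsto 0
      · exact hgc.tendsto.comp (hcseg.tendsto 0)
    exact this.mono_left nhdsWithin_le_nhds

/-! ### The real-axis computation -/

lemma fcot_real (c : ℝ) (u : ℝ) :
    fcot c (u : ℂ) = ((Real.exp (-u) * (Real.cos (c * u) / Real.sin (c * u)) : ℝ) : ℂ) := by
  simp only [fcot]
  push_cast
  ring

lemma sin_ne_zero_Icc (hc : 0 < c) {x u : ℝ} (hx : 0 < x) (hub : u ∈ Set.Icc x (π / (2 * c))) :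
    Real.sin (c * u) ≠ 0 := by
  have := sin_pos_real hc (lt_of_lt_of_le hx hub.1) (lt_of_le_of_lt hub.2 (bb_lt hc))
  exact this.ne'

/-- `F_c` on the real axis, after integration by parts. -/
lemma Fc_real (hc : 0 < c) {x : ℝ} (hx0 : 0 < x) (hxb : x < π / (2 * c)) :
    Fc c (x : ℂ) = ((Real.exp (-x) * Real.log (Real.sin (c * x)) / c
      - (1 / c) * ∫ u in x..(π / (2 * c)), Real.exp (-u) * Real.log (Real.sin (c * u)) : ℝ) : ℂ) := by
  set b := π / (2 * c) with hbdef
  have hb : 0 < b := bb_pos hc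
  have hblt : b < π / c := bb_lt hc
  have hsinne : ∀ u ∈ Set.Icc x b, Real.sin (c * u) ≠ 0 := fun u hu => sin_ne_zero_Icc hc hx0 hu
  have hfr_cont : ContinuousOn (fun u : ℝ => Real.exp (-u) * (Real.cos (c * u) / Real.sin (c * u)))
      (Set.Icc x b) := by
    apply ContinuousOn.mul
    · fun_prop
    · apply ContinuousOn.div
      · fun_prop
      · fun_prop
      · exact hsinne
  -- Step 1: Fc as a real integral over the segment parametrization
  have hseg_real : ∀ t : ℝ, segPoint c (x : ℂ) t = ((b + t * (x - b) : ℝ) : ℂ) := by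
    intro t
    simp only [segPoint, ← hbdef]
    push_cast
    ring
  have step1 : Fc c (x : ℂ)
      = Complex.ofReal (∫ t in (0:ℝ)..1, (x - b) * (Real.exp (-(b + t * (x - b)))
          * (Real.cos (c * (b + t * (x - b))) / Real.sin (c * (b + t * (x - b)))))) := by
    rw [Fc, ← intervalIntegral.integral_ofReal]
    apply intervalIntegral.integral_congr
    intro t ht
    show (↑x - ((π / (2 * c) : ℝ) : ℂ)) * fcot c (segPoint c (↑x) t) = _
    rw [hseg_real t, fcot_real, ← Complex.ofReal_sub, ← Complex.ofReal_mul]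
  -- Step 2: change of variables
  have himage : (fun t : ℝ => b + t * (x - b)) '' (Set.uIcc 0 1) ⊆ Set.Icc x b := by
    rintro u ⟨t, ht, rfl⟩
    rw [Set.uIcc_of_le (by norm_num : (0:ℝ) ≤ 1)] at ht
    simp only [Set.mem_Icc]
    constructor
    · nlinarith [mul_nonneg (sub_nonneg.mpr ht.2) (sub_nonneg.mpr hxb.le)]
    · nlinarith [mul_nonneg ht.1 (sub_nonneg.mpr hxb.le)]
  have step2 : (∫ t in (0:ℝ)..1, (x - b) * (Real.exp (-(b + t * (x - b)))
          * (Real.cos (c * (b + t * (x - b))) / Real.sin (c * (b + t * (x - b))))))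
      = ∫ u in b..x, Real.exp (-u) * (Real.cos (c * u) / Real.sin (c * u)) := by
    have h := intervalIntegral.integral_comp_smul_deriv'
      (f := fun t : ℝ => b + t * (x - b)) (f' := fun _ => x - b)
      (g := fun u : ℝ => Real.exp (-u) * (Real.cos (c * u) / Real.sin (c * u)))
      (a := 0) (b := 1)
      (fun t _ => by simpa using ((hasDerivAt_id t).mul_const (x - b)).const_add b)
      continuousOn_const (hfr_cont.mono himage)
    simp only [smul_eq_mul, Function.comp] at h
    rw [show b + 0 * (x - b) = b by ring, show b + 1 * (x - b) = x by ring] at h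
    exact h
  -- Step 3: integration by parts on [x, b]
  have hU : ∀ u ∈ Set.uIcc x b, HasDerivAt (fun u : ℝ => Real.exp (-u)) (-Real.exp (-u)) u := by
    intro u _
    simpa using ((hasDerivAt_id u).neg.exp)
  have huIcc : Set.uIcc x b = Set.Icc x b := Set.uIcc_of_le hxb.le
  have hV : ∀ u ∈ Set.uIcc x b, HasDerivAt (fun u : ℝ => Real.log (Real.sin (c * u)) / c)
      (Real.cos (c * u) / Real.sin (c * u)) u := by
    intro u hu
    rw [huIcc] at hu
    have hsin := hsinne u hu
    have hs : HasDerivAt (fun u : ℝ => Real.sin (c * u)) (Real.cos (c * u) * c) u :=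
      (Real.hasDerivAt_sin (c * u)).comp u (by simpa using (hasDerivAt_id u).const_mul c)
    have hlog := (Real.hasDerivAt_log hsin).comp u hs
    have := hlog.div_const c
    refine this.congr_deriv ?_
    rw [div_eq_iff hc.ne']
    ring
  have hUint : IntervalIntegrable (fun u : ℝ => -Real.exp (-u)) volume x b := by
    apply Continuous.intervalIntegrable; fun_prop
  have hVint : IntervalIntegrable (fun u : ℝ => Real.cos (c * u) / Real.sin (c * u))
      volume x b := by
    apply ContinuousOn.intervalIntegrable
    rw [huIcc]
    apply ContinuousOn.div
    · fun_prop
    · fun_prop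
    · exact hsinne
  have hIBP := intervalIntegral.integral_mul_deriv_eq_deriv_mul hU hV hUint hVint
  have hsinb : Real.sin (c * b) = 1 := by
    rw [hbdef, c_mul_bb hc, Real.sin_pi_div_two]
  have hlogb : Real.log (Real.sin (c * b)) = 0 := by rw [hsinb, Real.log_one]
  -- rewrite the remaining integral
  have hlast : (∫ u in x..b, -Real.exp (-u) * (Real.log (Real.sin (c * u)) / c))
      = -(1/c) * ∫ u in x..b, Real.exp (-u) * Real.log (Real.sin (c * u)) := by
    rw [← intervalIntegral.integral_const_mul]
    apply intervalIntegral.integral_congr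
    intro u _
    ring
  rw [hlast] at hIBP
  have hfin : (∫ u in x..b, Real.exp (-u) * (Real.cos (c * u) / Real.sin (c * u)))
      = -(Real.exp (-x) * (Real.log (Real.sin (c * x)) / c))
        + (1/c) * ∫ u in x..b, Real.exp (-u) * Real.log (Real.sin (c * u)) := by
    rw [hIBP, hlogb]
    ring
  rw [step1, step2, intervalIntegral.integral_symm x b, hfin]
  push_cast
  ring


/-! ### The real limit -/

lemma tendsto_A (hc : 0 < c) :
    Tendsto (fun x : ℝ => Real.exp (-x) * Real.log (Real.sin (c * x)) - Real.log (c * x))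
      (𝓝[>] (0:ℝ)) (𝓝 0) := by
  have hmap : Tendsto (fun x : ℝ => c * x) (𝓝[>] (0:ℝ)) (𝓝[≠] (0:ℝ)) := by
    rw [tendsto_nhdsWithin_iff]
    constructor
    · have hcont : Continuous fun x : ℝ => c * x := continuous_const.mul continuous_id
      have := hcont.tendsto (0:ℝ)
      simpa using this.mono_left nhdsWithin_le_nhds
    · filter_upwards [self_mem_nhdsWithin] with x hx
      have : (0:ℝ) < x := hx
      simp only [Set.mem_compl_iff, Set.mem_singleton_iff]
      positivity
  have h1 : Tendsto (fun y : ℝ => Real.sin y / y) (𝓝[≠] (0:ℝ)) (𝓝 1) := by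
    have := hasDerivAt_iff_tendsto_slope.mp (Real.hasDerivAt_sin 0)
    rw [Real.cos_zero] at this
    apply this.congr
    intro y
    simp [slope_def_field, div_eq_inv_mul]
  have h2 : Tendsto (fun x : ℝ => Real.sin (c * x) / (c * x)) (𝓝[>] (0:ℝ)) (𝓝 1) :=
    h1.comp hmap
  have h3 : Tendsto (fun x : ℝ => Real.log (Real.sin (c * x) / (c * x))) (𝓝[>] (0:ℝ)) (𝓝 0) := by
    have := (Real.continuousAt_log one_ne_zero).tendsto.comp h2
    rw [Real.log_one] at this
    exact this
  have h4 : Tendsto (fun x : ℝ => Real.exp (-x)) (𝓝[>] (0:ℝ)) (𝓝 1) := by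
    have : Continuous (fun x : ℝ => Real.exp (-x)) := by fun_prop
    have := this.tendsto (0:ℝ)
    simpa using this.mono_left nhdsWithin_le_nhds
  have h5 : Tendsto (fun x : ℝ => (Real.exp (-x) - 1) / x) (𝓝[>] (0:ℝ)) (𝓝 (-1)) := by
    have hder : HasDerivAt (fun x : ℝ => Real.exp (-x)) (-1) 0 := by
      have := ((hasDerivAt_id (0:ℝ)).neg).exp
      simpa using this
    have := hasDerivAt_iff_tendsto_slope.mp hder
    have h' := this.mono_left (nhdsWithin_mono 0 (fun x (hx : x ∈ Set.Ioi (0:ℝ)) =>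
      (ne_of_gt hx : x ≠ 0)))
    apply h'.congr
    intro y
    simp [slope_def_field, div_eq_inv_mul]
  have h6 : Tendsto (fun x : ℝ => x * Real.log (c * x)) (𝓝[>] (0:ℝ)) (𝓝 0) := by
    have hxlogx : Tendsto (fun x : ℝ => x * Real.log x) (𝓝[>] (0:ℝ)) (𝓝 0) := by
      have := Real.continuous_mul_log.tendsto (0:ℝ)
      simpa using this.mono_left nhdsWithin_le_nhds
    have hxlogc : Tendsto (fun x : ℝ => x * Real.log c) (𝓝[>] (0:ℝ)) (𝓝 0) := by
      have : Continuous (fun x : ℝ => x * Real.log c) := by fun_prop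
      have := this.tendsto (0:ℝ)
      simpa using this.mono_left nhdsWithin_le_nhds
    have hsum := hxlogc.add hxlogx
    rw [add_zero] at hsum
    apply hsum.congr'
    filter_upwards [self_mem_nhdsWithin] with x (hx : (0:ℝ) < x)
    rw [Real.log_mul hc.ne' hx.ne']
    ring
  have hterm2 : Tendsto (fun x : ℝ => (Real.exp (-x) - 1) * Real.log (c * x))
      (𝓝[>] (0:ℝ)) (𝓝 0) := by
    have := h5.mul h6
    rw [mul_zero] at this
    apply this.congr'
    filter_upwards [self_mem_nhdsWithin] with x (hx : (0:ℝ) < x)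
    field_simp
  have hterm1 : Tendsto (fun x : ℝ => Real.exp (-x) * Real.log (Real.sin (c * x) / (c * x)))
      (𝓝[>] (0:ℝ)) (𝓝 0) := by
    have := h4.mul h3
    simpa using this
  have hsum := hterm1.add hterm2
  rw [add_zero] at hsum
  apply hsum.congr'
  have hb : 0 < π / (2 * c) := bb_pos hc
  filter_upwards [Ioo_mem_nhdsGT_of_mem (Set.mem_Ico.mpr ⟨le_refl (0:ℝ), hb⟩)] with x hx
  obtain ⟨hx0, hxb⟩ := hx
  have hsin : 0 < Real.sin (c * x) := sin_pos_real hc hx0 (lt_trans hxb (bb_lt hc))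
  have hcx : (0:ℝ) < c * x := by positivity
  rw [Real.log_div hsin.ne' hcx.ne']
  ring

/-- The real axis map into the region. -/
lemma tendsto_ofReal_region (hc : 0 < c) :
    Tendsto (fun x : ℝ => (x : ℂ)) (𝓝[>] (0:ℝ)) (𝓝[regionR0 c] (0:ℂ)) := by
  rw [tendsto_nhdsWithin_iff]
  constructor
  · have := Complex.continuous_ofReal.tendsto (0:ℝ)
    simpa using this.mono_left nhdsWithin_le_nhds
  · have hb : 0 < π / c := by positivity
    filter_upwards [Ioo_mem_nhdsGT_of_mem (Set.mem_Ico.mpr ⟨le_refl (0:ℝ), hb⟩)] with x hx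
    obtain ⟨hx0, hxb⟩ := hx
    simp only [regionR0, Set.mem_setOf_eq, Complex.ofReal_re, Complex.ofReal_im]
    refine ⟨hx0, hxb, by norm_num, by norm_num⟩

end FcAux

/-- As `W → 0` in `ℛ₀`, `F_c(W) - (1/c) Log(cW)` converges to
`-(1/c) ∫₀^{π/(2c)} e^{-u} ln sin(cu) du`, the latter being a convergent improper
integral. -/
theorem Fc_asymptotics_at_zero (c : ℝ) (hc : 0 < c) :
    ∃ I : ℝ,
      Tendsto (fun ε : ℝ =>
          ∫ u in ε..(π / (2 * c)), Real.exp (-u) * Real.log (Real.sin (c * u)))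
        (𝓝[>] (0 : ℝ)) (𝓝 I) ∧
      Tendsto (fun W : ℂ => Fc c W - (1 / (c : ℂ)) * Complex.log ((c : ℂ) * W))
        (𝓝[regionR0 c] (0 : ℂ)) (𝓝 (-(1 / (c : ℂ)) * (I : ℂ))) := by
  classical
  open FcAux in
  have hb : 0 < π / (2 * c) := bb_pos hc
  have hcne : (c : ℂ) ≠ 0 := Complex.ofReal_ne_zero.mpr hc.ne'
  set I : ℝ := ∫ u in (0:ℝ)..(π / (2 * c)), Real.exp (-u) * Real.log (Real.sin (c * u)) with hIdef
  refine ⟨I, tendsto_I hc, ?_⟩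
  set L0 : ℂ := ∫ t in (0:ℝ)..1, ((0:ℂ) - ((π / (2 * c) : ℝ) : ℂ)) * FcAux.gext c (segPoint c 0 t)
    with hL0
  set K : ℂ := (1 / (c : ℂ)) * ((Real.log c + Real.log (π / (2 * c)) : ℝ) : ℂ) with hK
  -- eventual identity on the region
  have hball_mem : Metric.closedBall (0:ℂ) (π / (2 * c)) ∈ 𝓝[regionR0 c] (0:ℂ) :=
    nhdsWithin_le_nhds (Metric.closedBall_mem_nhds _ hb)
  have hev : (fun W : ℂ => Fc c W - (1 / (c : ℂ)) * Complex.log ((c : ℂ) * W))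
      =ᶠ[𝓝[regionR0 c] (0:ℂ)]
      (fun W : ℂ => (∫ t in (0:ℝ)..1, (W - ((π / (2 * c) : ℝ) : ℂ)) * FcAux.gext c (segPoint c W t))
        - K) := by
    filter_upwards [hball_mem, self_mem_nhdsWithin] with W hWb hWr
    rw [Metric.mem_closedBall, dist_zero_right] at hWb
    have hWre : 0 < W.re := hWr.1
    have hW0 : W ≠ 0 := by
      intro h; rw [h] at hWre; simp at hWre
    rw [FcAux.Fc_eq hc hWre hWb, Complex.log_ofReal_mul hc hW0,
      ← Complex.ofReal_log hb.le, hK]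
    push_cast
    ring
  have hcomplex : Tendsto (fun W : ℂ => Fc c W - (1 / (c : ℂ)) * Complex.log ((c : ℂ) * W))
      (𝓝[regionR0 c] (0:ℂ)) (𝓝 (L0 - K)) := by
    apply Tendsto.congr' hev.symm
    exact (FcAux.tendsto_Phi hc).sub_const K
  -- real-axis identification of the limit
  have hreal1 : Tendsto (fun x : ℝ => Fc c (x:ℂ) - (1 / (c : ℂ)) * Complex.log ((c : ℂ) * (x:ℂ)))
      (𝓝[>] (0:ℝ)) (𝓝 (L0 - K)) :=
    hcomplex.comp (FcAux.tendsto_ofReal_region hc)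
  have hElim : Tendsto (fun x : ℝ => Real.exp (-x) * Real.log (Real.sin (c * x)) / c
      - (1 / c) * (∫ u in x..(π / (2 * c)), Real.exp (-u) * Real.log (Real.sin (c * u)))
      - Real.log (c * x) / c)
      (𝓝[>] (0:ℝ)) (𝓝 (-(1/c) * I)) := by
    have h1 := (FcAux.tendsto_A hc).const_mul (1/c)
    have h2 := (FcAux.tendsto_I hc).const_mul (1/c)
    have := h1.sub h2
    rw [mul_zero, zero_sub] at this
    rw [show -(1/c) * I = -((1/c) * I) by ring]
    apply this.congr
    intro x
    ring
  have hreal2 : Tendsto (fun x : ℝ => Fc c (x:ℂ) - (1 / (c : ℂ)) * Complex.log ((c : ℂ) * (x:ℂ)))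
      (𝓝[>] (0:ℝ)) (𝓝 (((-(1/c) * I : ℝ)) : ℂ)) := by
    have hcast := (Complex.continuous_ofReal.tendsto _).comp hElim
    apply Tendsto.congr' _ hcast
    filter_upwards [Ioo_mem_nhdsGT_of_mem (Set.mem_Ico.mpr ⟨le_refl (0:ℝ), hb⟩)] with x hx
    obtain ⟨hx0, hxb⟩ := hx
    have hcx : (0:ℝ) < c * x := by positivity
    rw [Function.comp_apply, FcAux.Fc_real hc hx0 hxb,
      show ((c:ℂ) * (x:ℂ)) = (((c * x : ℝ)) : ℂ) by push_cast; ring,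
      ← Complex.ofReal_log hcx.le]
    push_cast
    ring
  have huniq : L0 - K = (((-(1/c) * I : ℝ)) : ℂ) := tendsto_nhds_unique hreal1 hreal2
  rw [show -(1 / (c:ℂ)) * (I : ℂ) = (((-(1/c) * I : ℝ)) : ℂ) by push_cast; ring, ← huniq]
  exact hcomplex
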